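/- Nesting of Weyl discs under the ⊲ operation: For Q ∈ 𝓜(1,r,+) with blocks [[α,β],[γ,δ]] define the Weyl disc 𝕎_Q ⊂ ℂ as the closure of { α + βA(1_r − δA)^{-1}γ : A ∈ ℂ^{r×r}, Im(A) positive semidefinite } (the inverse exists since Im(δ) is positive definite). If Q ∈ 𝓜(1,r,+) and R ∈ 𝓜(r,s,+), then (Q,R) is ⊲_r-suitable, Q ⊲_r R ∈ 𝓜(1,s,+), and 𝕎_{Q ⊲_r R} ⊆ 𝕎_Q. -/

import Mathlib

open Matrix
open scoped ComplexOrder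

noncomputable section

/-- The imaginary part `(M − M^*)/(2i)` of a square complex matrix. -/
def matIm {n : Type*} (M : Matrix n n ℂ) : Matrix n n ℂ :=
  (2 * Complex.I)⁻¹ • (M - Mᴴ)

/-- The pair `(Q, R)` (with assigned block splittings) is `⊲`-suitable:
`1 - α̃ δ` is invertible. -/
def Suitable {q r s : ℕ}
    (Q : Matrix (Fin q ⊕ Fin r) (Fin q ⊕ Fin r) ℂ)
    (R : Matrix (Fin r ⊕ Fin s) (Fin r ⊕ Fin s) ℂ) : Prop :=
  IsUnit (1 - R.toBlocks₁₁ * Q.toBlocks₂₂)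

/-- The operation `Q ⊲_r R` on block matrices. -/
def tri {q r s : ℕ}
    (Q : Matrix (Fin q ⊕ Fin r) (Fin q ⊕ Fin r) ℂ)
    (R : Matrix (Fin r ⊕ Fin s) (Fin r ⊕ Fin s) ℂ) :
    Matrix (Fin q ⊕ Fin s) (Fin q ⊕ Fin s) ℂ :=
  fromBlocks
    (Q.toBlocks₁₁ +
      Q.toBlocks₁₂ * (1 - R.toBlocks₁₁ * Q.toBlocks₂₂)⁻¹ * R.toBlocks₁₁ * Q.toBlocks₂₁)
    (Q.toBlocks₁₂ * (1 - R.toBlocks₁₁ * Q.toBlocks₂₂)⁻¹ * R.toBlocks₁₂)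
    (R.toBlocks₂₁ * (1 - Q.toBlocks₂₂ * R.toBlocks₁₁)⁻¹ * Q.toBlocks₂₁)
    (R.toBlocks₂₂ +
      R.toBlocks₂₁ * (1 - Q.toBlocks₂₂ * R.toBlocks₁₁)⁻¹ * Q.toBlocks₂₂ * R.toBlocks₁₂)

/-- `Q ∈ 𝓜(q,r,+)`: `Im(α)` and `Im(δ)` are positive definite and `Im(Q)` is
positive semidefinite. -/
def MPlus {q r : ℕ} (Q : Matrix (Fin q ⊕ Fin r) (Fin q ⊕ Fin r) ℂ) : Prop :=
  (matIm Q.toBlocks₁₁).PosDef ∧ (matIm Q.toBlocks₂₂).PosDef ∧ (matIm Q).PosSemidef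

/-- The Weyl disc of `Q ∈ 𝓜(1,r,+)`: the closure of
`{α + βA(1 − δA)⁻¹γ : Im(A) positive semidefinite}`. -/
def weylDisc {r : ℕ} (Q : Matrix (Fin 1 ⊕ Fin r) (Fin 1 ⊕ Fin r) ℂ) : Set ℂ :=
  closure {w : ℂ | ∃ A : Matrix (Fin r) (Fin r) ℂ, (matIm A).PosSemidef ∧
    w = (Q.toBlocks₁₁ 0 0 +
      (Q.toBlocks₁₂ * A * (1 - Q.toBlocks₂₂ * A)⁻¹ * Q.toBlocks₂₁) 0 0)}

section Helpers

variable {n m : Type*} [Fintype n] [Fintype m]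

lemma conj_quad (M : Matrix n n ℂ) (x : n → ℂ) :
    star x ⬝ᵥ Mᴴ *ᵥ x = (starRingEnd ℂ) (star x ⬝ᵥ M *ᵥ x) := by
  rw [star_dotProduct, star_mulVec, conjTranspose_conjTranspose,
    ← dotProduct_mulVec]
  rfl

/-- quadratic form of the imaginary part -/
lemma quadIm (M : Matrix n n ℂ) (x : n → ℂ) :
    star x ⬝ᵥ (matIm M) *ᵥ x = ((star x ⬝ᵥ M *ᵥ x).im : ℂ) := by
  have : star x ⬝ᵥ (matIm M) *ᵥ x
      = (2 * Complex.I)⁻¹ * (star x ⬝ᵥ M *ᵥ x - (starRingEnd ℂ) (star x ⬝ᵥ M *ᵥ x)) := by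
    rw [matIm, smul_mulVec, dotProduct_smul, sub_mulVec, dotProduct_sub, conj_quad,
      smul_eq_mul]
  rw [this, Complex.sub_conj]
  set z := star x ⬝ᵥ M *ᵥ x
  have h2 : (2 : ℂ) * Complex.I ≠ 0 := by
    simp [Complex.I_ne_zero]
  field_simp
  push_cast
  ring

lemma matIm_isHermitian (M : Matrix n n ℂ) : (matIm M).IsHermitian := by
  unfold matIm Matrix.IsHermitian
  rw [conjTranspose_smul, conjTranspose_sub, conjTranspose_conjTranspose]
  rw [show (star ((2 * Complex.I)⁻¹) : ℂ) = -(2 * Complex.I)⁻¹ by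
    simp [Complex.ext_iff, Complex.inv_im, Complex.inv_re]]
  rw [neg_smul, ← smul_neg, neg_sub]

lemma posSemidef_matIm_iff (M : Matrix n n ℂ) :
    (matIm M).PosSemidef ↔ ∀ x : n → ℂ, 0 ≤ (star x ⬝ᵥ M *ᵥ x).im := by
  constructor
  · intro h x
    have := (posSemidef_iff_dotProduct_mulVec.mp h).2 x
    rw [quadIm] at this
    exact_mod_cast (Complex.zero_le_real).mp this
  · intro h
    refine posSemidef_iff_dotProduct_mulVec.mpr ⟨matIm_isHermitian M, fun x => ?_⟩
    rw [quadIm]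
    exact_mod_cast Complex.zero_le_real.mpr (h x)

lemma posDef_matIm_iff (M : Matrix n n ℂ) :
    (matIm M).PosDef ↔ ∀ x : n → ℂ, x ≠ 0 → 0 < (star x ⬝ᵥ M *ᵥ x).im := by
  constructor
  · intro h x hx
    have := (posDef_iff_dotProduct_mulVec.mp h).2 hx
    rw [quadIm] at this
    exact_mod_cast (Complex.zero_lt_real).mp this
  · intro h
    refine posDef_iff_dotProduct_mulVec.mpr ⟨matIm_isHermitian M, fun x hx => ?_⟩
    rw [quadIm]
    exact_mod_cast Complex.zero_lt_real.mpr (h x hx)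

variable [DecidableEq n] [DecidableEq m]

/-- KEY: if `Im M` is positive definite and `Im N` positive semidefinite then `1 - M*N`
is invertible. -/
lemma key_isUnit {M N : Matrix n n ℂ} (hM : (matIm M).PosDef) (hN : (matIm N).PosSemidef) :
    IsUnit (1 - M * N) := by
  rw [Matrix.isUnit_iff_isUnit_det, isUnit_iff_ne_zero]
  intro hdet
  obtain ⟨v, hv, hv0⟩ := (Matrix.exists_mulVec_eq_zero_iff).mpr hdet
  rw [sub_mulVec, one_mulVec, sub_eq_zero, ← Matrix.mulVec_mulVec] at hv0
  set w := N *ᵥ v with hw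
  have hwne : w ≠ 0 := by
    intro h0
    exact hv (by rw [hv0, h0, mulVec_zero])
  have h1 : 0 < (star w ⬝ᵥ M *ᵥ w).im := (posDef_matIm_iff M).mp hM w hwne
  have h2 : 0 ≤ (star v ⬝ᵥ N *ᵥ v).im := (posSemidef_matIm_iff N).mp hN v
  have hc : star w ⬝ᵥ M *ᵥ w = star (star v ⬝ᵥ N *ᵥ v) := by
    rw [← hv0, star_dotProduct, ← hw]
  rw [hc, Complex.star_def, Complex.conj_im] at h1
  linarith

/-- swap version -/
lemma key_isUnit' {M N : Matrix n n ℂ} (hM : (matIm M).PosDef) (hN : (matIm N).PosSemidef) :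
    IsUnit (1 - N * M) := by
  rw [Matrix.isUnit_iff_isUnit_det, isUnit_iff_ne_zero]
  intro hdet
  obtain ⟨v, hv, hv0⟩ := (Matrix.exists_mulVec_eq_zero_iff).mpr hdet
  rw [sub_mulVec, one_mulVec, sub_eq_zero, ← Matrix.mulVec_mulVec] at hv0
  have hMv : M *ᵥ v = 0 := by
    have hu := key_isUnit hM hN
    rw [Matrix.isUnit_iff_isUnit_det] at hu
    have h3 : (1 - M * N) *ᵥ (M *ᵥ v) = 0 := by
      rw [sub_mulVec, one_mulVec, sub_eq_zero, ← Matrix.mulVec_mulVec]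
      conv_lhs => rw [hv0]
    by_contra hne
    exact isUnit_iff_ne_zero.mp hu (Matrix.exists_mulVec_eq_zero_iff.mp ⟨M *ᵥ v, hne, h3⟩)
  exact hv (by rw [hv0, hMv, mulVec_zero])

lemma star_sum_elim (x : n → ℂ) (y : m → ℂ) :
    star (Sum.elim x y) = Sum.elim (star x) (star y) := by
  funext i; cases i <;> rfl

lemma quad_fromBlocks (a : Matrix n n ℂ) (b : Matrix n m ℂ) (c : Matrix m n ℂ)
    (d : Matrix m m ℂ) (x : n → ℂ) (y : m → ℂ) :
    star (Sum.elim x y) ⬝ᵥ (fromBlocks a b c d) *ᵥ (Sum.elim x y)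
      = star x ⬝ᵥ (a *ᵥ x + b *ᵥ y) + star y ⬝ᵥ (c *ᵥ x + d *ᵥ y) := by
  rw [fromBlocks_mulVec, star_sum_elim, sumElim_dotProduct_sumElim,
    Sum.elim_comp_inl, Sum.elim_comp_inr]

-- inverse helpers
lemma hMul_nonsing_inv' {A : Matrix n n ℂ} (h : IsUnit A) : A * A⁻¹ = 1 :=
  Matrix.mul_nonsing_inv A (Matrix.isUnit_iff_isUnit_det A |>.mp h)

lemma nonsing_inv_hMul' {A : Matrix n n ℂ} (h : IsUnit A) : A⁻¹ * A = 1 :=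
  Matrix.nonsing_inv_mul A (Matrix.isUnit_iff_isUnit_det A |>.mp h)

/-- `(1-AB)⁻¹ = 1 + A*B*(1-AB)⁻¹`. -/
lemma inv_one_sub_expand {A : Matrix n n ℂ} {B : Matrix n n ℂ}
    (h : IsUnit (1 - A * B)) : (1 - A * B)⁻¹ = 1 + A * B * (1 - A * B)⁻¹ := by
  have h2 := hMul_nonsing_inv' h
  rw [sub_mul, one_mul] at h2
  exact sub_eq_iff_eq_add.mp h2

/-- `A (1-BA)⁻¹ = (1-AB)⁻¹ A`. -/
lemma mul_inv_comm' {A : Matrix n m ℂ} {B : Matrix m n ℂ}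
    (h1 : IsUnit (1 - A * B)) (h2 : IsUnit (1 - B * A)) :
    A * (1 - B * A)⁻¹ = (1 - A * B)⁻¹ * A := by
  have key : (1 - A * B) * A = A * (1 - B * A) := by
    rw [Matrix.sub_mul, Matrix.mul_sub, Matrix.one_mul, Matrix.mul_one,
      Matrix.mul_assoc]
  calc A * (1 - B * A)⁻¹
      = (1 : Matrix n n ℂ) * A * (1 - B * A)⁻¹ := by rw [Matrix.one_mul]
    _ = (1 - A*B)⁻¹ * (1 - A*B) * A * (1 - B * A)⁻¹ := by rw [nonsing_inv_hMul' h1]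
    _ = (1 - A*B)⁻¹ * ((1 - A*B) * A) * (1 - B * A)⁻¹ := by
        rw [Matrix.mul_assoc ((1 - A*B)⁻¹)]
    _ = (1 - A*B)⁻¹ * (A * (1 - B*A)) * (1 - B * A)⁻¹ := by rw [key]
    _ = (1 - A*B)⁻¹ * A * ((1 - B*A) * (1 - B * A)⁻¹) := by
        rw [Matrix.mul_assoc, Matrix.mul_assoc, Matrix.mul_assoc]
    _ = (1 - A * B)⁻¹ * A := by rw [hMul_nonsing_inv' h2, Matrix.mul_one]

section TriVec

variable {q r s : ℕ}
  (Q : Matrix (Fin q ⊕ Fin r) (Fin q ⊕ Fin r) ℂ)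
  (R : Matrix (Fin r ⊕ Fin s) (Fin r ⊕ Fin s) ℂ)

/-- The basic vector relations underlying `tri`. -/
lemma tri_vec (hu : IsUnit (1 - R.toBlocks₁₁ * Q.toBlocks₂₂))
    (hu' : IsUnit (1 - Q.toBlocks₂₂ * R.toBlocks₁₁))
    (x : Fin q → ℂ) (y : Fin s → ℂ)
    (u v : Fin r → ℂ)
    (hudef : u = (1 - R.toBlocks₁₁ * Q.toBlocks₂₂)⁻¹ *ᵥ
      (R.toBlocks₁₁ *ᵥ (Q.toBlocks₂₁ *ᵥ x) + R.toBlocks₁₂ *ᵥ y))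
    (hv : v = Q.toBlocks₂₁ *ᵥ x + Q.toBlocks₂₂ *ᵥ u) :
    u = R.toBlocks₁₁ *ᵥ v + R.toBlocks₁₂ *ᵥ y ∧
    (tri Q R).toBlocks₁₁ *ᵥ x + (tri Q R).toBlocks₁₂ *ᵥ y
      = Q.toBlocks₁₁ *ᵥ x + Q.toBlocks₁₂ *ᵥ u ∧
    (tri Q R).toBlocks₂₁ *ᵥ x + (tri Q R).toBlocks₂₂ *ᵥ y
      = R.toBlocks₂₂ *ᵥ y + R.toBlocks₂₁ *ᵥ v := by
  set a := Q.toBlocks₁₁; set b := Q.toBlocks₁₂; set c := Q.toBlocks₂₁; set d := Q.toBlocks₂₂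
  set a' := R.toBlocks₁₁; set b' := R.toBlocks₁₂; set c' := R.toBlocks₂₁; set d' := R.toBlocks₂₂
  have hue : (1 - a' * d) *ᵥ u = a' *ᵥ (c *ᵥ x) + b' *ᵥ y := by
    rw [hudef, mulVec_mulVec, hMul_nonsing_inv' hu, one_mulVec]
  rw [sub_mulVec, one_mulVec, sub_eq_iff_eq_add] at hue
  -- hue : u = (a' *ᵥ (c *ᵥ x) + b' *ᵥ y) + (a' * d) *ᵥ u
  have hurel : u = a' *ᵥ v + b' *ᵥ y := by
    rw [hv]
    simp only [mulVec_add, mulVec_mulVec]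
    conv_lhs => rw [hue]
    try simp only [mulVec_mulVec]
    abel
  refine ⟨hurel, ?_, ?_⟩
  · rw [show (tri Q R).toBlocks₁₁ = a + b * (1 - a'*d)⁻¹ * a' * c from rfl,
      show (tri Q R).toBlocks₁₂ = b * (1 - a'*d)⁻¹ * b' from rfl, hudef]
    simp only [add_mulVec, mulVec_add, mulVec_mulVec, Matrix.mul_assoc]
    try simp only [mulVec_mulVec]
    abel
  · have hve : (1 - d * a') *ᵥ v = c *ᵥ x + d *ᵥ (b' *ᵥ y) := by
      rw [sub_mulVec, one_mulVec, sub_eq_iff_eq_add]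
      conv_lhs => rw [hv]
      conv_lhs => rw [hurel]
      simp only [mulVec_add, mulVec_mulVec]
      abel
    have hvinv : v = (1 - d * a')⁻¹ *ᵥ (c *ᵥ x + d *ᵥ (b' *ᵥ y)) := by
      rw [← hve, mulVec_mulVec, nonsing_inv_hMul' hu', one_mulVec]
    rw [show (tri Q R).toBlocks₂₁ = c' * (1 - d*a')⁻¹ * c from rfl,
      show (tri Q R).toBlocks₂₂ = d' + c' * (1 - d*a')⁻¹ * d * b' from rfl, hvinv]
    simp only [add_mulVec, mulVec_add, mulVec_mulVec, Matrix.mul_assoc]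
    try simp only [mulVec_mulVec]
    abel

/-- The quadratic-form additivity for `tri`. -/
lemma tri_quad (hu : IsUnit (1 - R.toBlocks₁₁ * Q.toBlocks₂₂))
    (hu' : IsUnit (1 - Q.toBlocks₂₂ * R.toBlocks₁₁))
    (x : Fin q → ℂ) (y : Fin s → ℂ)
    (u v : Fin r → ℂ)
    (hudef : u = (1 - R.toBlocks₁₁ * Q.toBlocks₂₂)⁻¹ *ᵥ
      (R.toBlocks₁₁ *ᵥ (Q.toBlocks₂₁ *ᵥ x) + R.toBlocks₁₂ *ᵥ y))
    (hv : v = Q.toBlocks₂₁ *ᵥ x + Q.toBlocks₂₂ *ᵥ u) :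
    (star (Sum.elim x y) ⬝ᵥ tri Q R *ᵥ Sum.elim x y).im
      = (star (Sum.elim x u) ⬝ᵥ Q *ᵥ Sum.elim x u).im
        + (star (Sum.elim v y) ⬝ᵥ R *ᵥ Sum.elim v y).im := by
  obtain ⟨hurel, hA, hB⟩ := tri_vec Q R hu hu' x y u v hudef hv
  have hT : star (Sum.elim x y) ⬝ᵥ tri Q R *ᵥ Sum.elim x y
      = star x ⬝ᵥ ((tri Q R).toBlocks₁₁ *ᵥ x + (tri Q R).toBlocks₁₂ *ᵥ y)
        + star y ⬝ᵥ ((tri Q R).toBlocks₂₁ *ᵥ x + (tri Q R).toBlocks₂₂ *ᵥ y) := by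
    conv_lhs => rw [← fromBlocks_toBlocks (tri Q R)]
    exact quad_fromBlocks _ _ _ _ x y
  have hQq : star (Sum.elim x u) ⬝ᵥ Q *ᵥ Sum.elim x u
      = star x ⬝ᵥ (Q.toBlocks₁₁ *ᵥ x + Q.toBlocks₁₂ *ᵥ u) + star u ⬝ᵥ v := by
    conv_lhs => rw [← fromBlocks_toBlocks Q]
    rw [quad_fromBlocks, ← hv]
  have hRq : star (Sum.elim v y) ⬝ᵥ R *ᵥ Sum.elim v y
      = star v ⬝ᵥ u + star y ⬝ᵥ (R.toBlocks₂₁ *ᵥ v + R.toBlocks₂₂ *ᵥ y) := by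
    conv_lhs => rw [← fromBlocks_toBlocks R]
    rw [quad_fromBlocks, ← hurel]
  have hsum : star (Sum.elim x u) ⬝ᵥ Q *ᵥ Sum.elim x u
      + star (Sum.elim v y) ⬝ᵥ R *ᵥ Sum.elim v y
      = star (Sum.elim x y) ⬝ᵥ tri Q R *ᵥ Sum.elim x y
        + (star u ⬝ᵥ v + star v ⬝ᵥ u) := by
    rw [hT, hQq, hRq, hA, hB]
    simp only [dotProduct_add]
    ring
  have him : (star u ⬝ᵥ v + star v ⬝ᵥ u).im = 0 := by
    rw [show star v ⬝ᵥ u = star (star u ⬝ᵥ v) from star_dotProduct v u, Complex.add_im,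
      Complex.star_def, Complex.conj_im]
    ring
  have := congrArg Complex.im hsum
  rw [Complex.add_im, Complex.add_im, him] at this
  linarith

lemma quad_elim_left {k l : ℕ} (M : Matrix (Fin k ⊕ Fin l) (Fin k ⊕ Fin l) ℂ) (x : Fin k → ℂ) :
    star (Sum.elim x (0 : Fin l → ℂ)) ⬝ᵥ M *ᵥ Sum.elim x 0
      = star x ⬝ᵥ M.toBlocks₁₁ *ᵥ x := by
  conv_lhs => rw [← fromBlocks_toBlocks M]
  rw [quad_fromBlocks]
  simp

lemma quad_elim_right {k l : ℕ} (M : Matrix (Fin k ⊕ Fin l) (Fin k ⊕ Fin l) ℂ) (y : Fin l → ℂ) :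
    star (Sum.elim (0 : Fin k → ℂ) y) ⬝ᵥ M *ᵥ Sum.elim 0 y
      = star y ⬝ᵥ M.toBlocks₂₂ *ᵥ y := by
  conv_lhs => rw [← fromBlocks_toBlocks M]
  rw [quad_fromBlocks]
  simp

/-- The main structural result: suitability and membership of `tri Q R` in the class. -/
lemma mplus_tri (hQ : MPlus Q) (hR : MPlus R) : Suitable Q R ∧ MPlus (tri Q R) := by
  obtain ⟨hQa, hQd, hQ2⟩ := hQ
  obtain ⟨hRa, hRd, hR2⟩ := hR
  have hu : IsUnit (1 - R.toBlocks₁₁ * Q.toBlocks₂₂) := key_isUnit hRa hQd.posSemidef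
  have hu' : IsUnit (1 - Q.toBlocks₂₂ * R.toBlocks₁₁) := key_isUnit' hRa hQd.posSemidef
  refine ⟨hu, ?_, ?_, ?_⟩
  · -- Im α̂ posdef
    rw [posDef_matIm_iff]
    intro x hx
    set u : Fin r → ℂ := (1 - R.toBlocks₁₁ * Q.toBlocks₂₂)⁻¹ *ᵥ
      (R.toBlocks₁₁ *ᵥ (Q.toBlocks₂₁ *ᵥ x) + R.toBlocks₁₂ *ᵥ (0 : Fin s → ℂ)) with hudef
    set v : Fin r → ℂ := Q.toBlocks₂₁ *ᵥ x + Q.toBlocks₂₂ *ᵥ u with hv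
    obtain ⟨hurel, -, -⟩ := tri_vec Q R hu hu' x 0 u v hudef hv
    have hq := tri_quad Q R hu hu' x 0 u v hudef hv
    rw [quad_elim_left] at hq
    rw [hq]
    have h1 : 0 ≤ (star (Sum.elim x u) ⬝ᵥ Q *ᵥ Sum.elim x u).im :=
      (posSemidef_matIm_iff Q).mp hQ2 _
    by_cases hvz : v = 0
    · have huz : u = 0 := by
        rw [hurel, hvz, mulVec_zero, mulVec_zero, add_zero]
      have : (star (Sum.elim x u) ⬝ᵥ Q *ᵥ Sum.elim x u).im
          = (star x ⬝ᵥ Q.toBlocks₁₁ *ᵥ x).im := by rw [huz, quad_elim_left]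
      have h3 : 0 < (star x ⬝ᵥ Q.toBlocks₁₁ *ᵥ x).im := (posDef_matIm_iff _).mp hQa x hx
      have h4 : 0 ≤ (star (Sum.elim v (0 : Fin s → ℂ)) ⬝ᵥ R *ᵥ Sum.elim v 0).im :=
        (posSemidef_matIm_iff R).mp hR2 _
      linarith
    · have h3 : 0 < (star (Sum.elim v (0 : Fin s → ℂ)) ⬝ᵥ R *ᵥ Sum.elim v 0).im := by
        rw [quad_elim_left]
        exact (posDef_matIm_iff _).mp hRa v hvz
      linarith
  · -- Im δ̂ posdef
    rw [posDef_matIm_iff]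
    intro y hy
    set u : Fin r → ℂ := (1 - R.toBlocks₁₁ * Q.toBlocks₂₂)⁻¹ *ᵥ
      (R.toBlocks₁₁ *ᵥ (Q.toBlocks₂₁ *ᵥ (0 : Fin q → ℂ)) + R.toBlocks₁₂ *ᵥ y) with hudef
    set v : Fin r → ℂ := Q.toBlocks₂₁ *ᵥ (0 : Fin q → ℂ) + Q.toBlocks₂₂ *ᵥ u with hv
    have hq := tri_quad Q R hu hu' 0 y u v hudef hv
    rw [quad_elim_right] at hq
    rw [hq]
    have h2 : 0 ≤ (star (Sum.elim v y) ⬝ᵥ R *ᵥ Sum.elim v y).im :=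
      (posSemidef_matIm_iff R).mp hR2 _
    by_cases huz : u = 0
    · have hvz : v = 0 := by rw [hv, huz, mulVec_zero, mulVec_zero, add_zero]
      have h3 : 0 < (star (Sum.elim v y) ⬝ᵥ R *ᵥ Sum.elim v y).im := by
        rw [hvz, quad_elim_right]
        exact (posDef_matIm_iff _).mp hRd y hy
      have h4 : 0 ≤ (star (Sum.elim (0 : Fin q → ℂ) u) ⬝ᵥ Q *ᵥ Sum.elim 0 u).im :=
        (posSemidef_matIm_iff Q).mp hQ2 _
      linarith
    · have h3 : 0 < (star (Sum.elim (0 : Fin q → ℂ) u) ⬝ᵥ Q *ᵥ Sum.elim 0 u).im := by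
        rw [quad_elim_right]
        exact (posDef_matIm_iff _).mp hQd u huz
      linarith
  · -- Im (tri) possemidef
    rw [posSemidef_matIm_iff]
    intro z
    have hz : z = Sum.elim (z ∘ Sum.inl) (z ∘ Sum.inr) := by
      funext i; cases i <;> rfl
    rw [hz]
    set x := z ∘ Sum.inl
    set y := z ∘ Sum.inr
    set u : Fin r → ℂ := (1 - R.toBlocks₁₁ * Q.toBlocks₂₂)⁻¹ *ᵥ
      (R.toBlocks₁₁ *ᵥ (Q.toBlocks₂₁ *ᵥ x) + R.toBlocks₁₂ *ᵥ y) with hudef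
    set v : Fin r → ℂ := Q.toBlocks₂₁ *ᵥ x + Q.toBlocks₂₂ *ᵥ u with hv
    rw [tri_quad Q R hu hu' x y u v hudef hv]
    have h1 : 0 ≤ (star (Sum.elim x u) ⬝ᵥ Q *ᵥ Sum.elim x u).im :=
      (posSemidef_matIm_iff Q).mp hQ2 _
    have h2 : 0 ≤ (star (Sum.elim v y) ⬝ᵥ R *ᵥ Sum.elim v y).im :=
      (posSemidef_matIm_iff R).mp hR2 _
    linarith

end TriVec

section Mobius

/-- The Möbius image of a parameter with psd imaginary part again has psd imaginary part. -/
lemma mobius_psd {k l : ℕ} (R : Matrix (Fin k ⊕ Fin l) (Fin k ⊕ Fin l) ℂ)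
    (hR2 : (matIm R).PosSemidef) (hRd : (matIm R.toBlocks₂₂).PosDef)
    (A : Matrix (Fin l) (Fin l) ℂ) (hA : (matIm A).PosSemidef) :
    (matIm (R.toBlocks₁₁ + R.toBlocks₁₂ * A * (1 - R.toBlocks₂₂ * A)⁻¹ * R.toBlocks₂₁)).PosSemidef := by
  have he5 : IsUnit (1 - R.toBlocks₂₂ * A) := key_isUnit hRd hA
  rw [posSemidef_matIm_iff]
  intro x
  set t : Fin l → ℂ := (1 - R.toBlocks₂₂ * A)⁻¹ *ᵥ (R.toBlocks₂₁ *ᵥ x) with ht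
  have h1 : (R.toBlocks₁₁ + R.toBlocks₁₂ * A * (1 - R.toBlocks₂₂ * A)⁻¹ * R.toBlocks₂₁) *ᵥ x
      = R.toBlocks₁₁ *ᵥ x + R.toBlocks₁₂ *ᵥ (A *ᵥ t) := by
    rw [ht]
    simp only [add_mulVec, ← mulVec_mulVec]
  have h2 : R.toBlocks₂₁ *ᵥ x + R.toBlocks₂₂ *ᵥ (A *ᵥ t) = t := by
    have : (1 - R.toBlocks₂₂ * A) *ᵥ t = R.toBlocks₂₁ *ᵥ x := by
      rw [ht, mulVec_mulVec, hMul_nonsing_inv' he5, one_mulVec]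
    rw [sub_mulVec, one_mulVec, sub_eq_iff_eq_add] at this
    conv_rhs => rw [this]
    rw [mulVec_mulVec]
  have hq : star (Sum.elim x (A *ᵥ t)) ⬝ᵥ R *ᵥ Sum.elim x (A *ᵥ t)
      = star x ⬝ᵥ ((R.toBlocks₁₁ + R.toBlocks₁₂ * A * (1 - R.toBlocks₂₂ * A)⁻¹ * R.toBlocks₂₁) *ᵥ x)
        + star (A *ᵥ t) ⬝ᵥ t := by
    conv_lhs => rw [← fromBlocks_toBlocks R]
    rw [quad_fromBlocks, h2, ← h1]
  have him : (star (A *ᵥ t) ⬝ᵥ t).im = -(star t ⬝ᵥ A *ᵥ t).im := by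
    rw [show star (A *ᵥ t) ⬝ᵥ t = star (star t ⬝ᵥ A *ᵥ t) from star_dotProduct _ _,
      Complex.star_def, Complex.conj_im]
  have hRq : 0 ≤ (star (Sum.elim x (A *ᵥ t)) ⬝ᵥ R *ᵥ Sum.elim x (A *ᵥ t)).im :=
    (posSemidef_matIm_iff R).mp hR2 _
  have hAq : 0 ≤ (star t ⬝ᵥ A *ᵥ t).im := (posSemidef_matIm_iff A).mp hA t
  have := congrArg Complex.im hq
  rw [Complex.add_im, him] at this
  linarith

end Mobius

section Compose

variable {q r s : ℕ}
  (Q : Matrix (Fin q ⊕ Fin r) (Fin q ⊕ Fin r) ℂ)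
  (R : Matrix (Fin r ⊕ Fin s) (Fin r ⊕ Fin s) ℂ)

/-- Composition identity: the point of `tri Q R` at parameter `A` equals the point of `Q` at
the Möbius image `A'` of `A` under `R`. -/
lemma tri_point_eq (hQd : (matIm Q.toBlocks₂₂).PosDef)
    (hRa : (matIm R.toBlocks₁₁).PosDef) (hRd : (matIm R.toBlocks₂₂).PosDef)
    (hR2 : (matIm R).PosSemidef)
    (hdelta : (matIm (tri Q R).toBlocks₂₂).PosDef)
    (A : Matrix (Fin s) (Fin s) ℂ) (hA : (matIm A).PosSemidef) :
    (tri Q R).toBlocks₁₁ + (tri Q R).toBlocks₁₂ * A * (1 - (tri Q R).toBlocks₂₂ * A)⁻¹ *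
        (tri Q R).toBlocks₂₁
      = Q.toBlocks₁₁ + Q.toBlocks₁₂ *
          (R.toBlocks₁₁ + R.toBlocks₁₂ * A * (1 - R.toBlocks₂₂ * A)⁻¹ * R.toBlocks₂₁) *
          (1 - Q.toBlocks₂₂ *
            (R.toBlocks₁₁ + R.toBlocks₁₂ * A * (1 - R.toBlocks₂₂ * A)⁻¹ * R.toBlocks₂₁))⁻¹ *
          Q.toBlocks₂₁ := by
  have hA' : (matIm (R.toBlocks₁₁ + R.toBlocks₁₂ * A * (1 - R.toBlocks₂₂ * A)⁻¹ *
      R.toBlocks₂₁)).PosSemidef := mobius_psd R hR2 hRd A hA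
  set a := Q.toBlocks₁₁; set b := Q.toBlocks₁₂; set c := Q.toBlocks₂₁; set d := Q.toBlocks₂₂
  set a' := R.toBlocks₁₁; set b' := R.toBlocks₁₂; set c' := R.toBlocks₂₁; set d' := R.toBlocks₂₂
  set t11 := (tri Q R).toBlocks₁₁ with ht11
  set t12 := (tri Q R).toBlocks₁₂ with ht12
  set t21 := (tri Q R).toBlocks₂₁ with ht21
  set t22 := (tri Q R).toBlocks₂₂ with ht22
  set A' := a' + b' * A * (1 - d' * A)⁻¹ * c' with hA'def
  have hu : IsUnit (1 - a' * d) := key_isUnit hRa hQd.posSemidef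
  have hu' : IsUnit (1 - d * a') := key_isUnit' hRa hQd.posSemidef
  have e3 : IsUnit (1 - t22 * A) := key_isUnit hdelta hA
  have e5 : IsUnit (1 - d' * A) := key_isUnit hRd hA
  have e6 : IsUnit (1 - A * d') := key_isUnit' hRd hA
  have e7 : IsUnit (1 - d * A') := key_isUnit hQd hA'
  have e8 : IsUnit (1 - A' * d) := key_isUnit' hQd hA'
  set P := A * (1 - t22 * A)⁻¹ * t21 with hPdef
  set U := (1 - a' * d)⁻¹ * (a' * c + b' * P) with hUdef
  set V := c + d * U with hVdef
  have f1 : (1 - a' * d) * U = a' * c + b' * P := by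
    rw [hUdef, ← Matrix.mul_assoc, hMul_nonsing_inv' hu, Matrix.one_mul]
  have f2 : U = a' * V + b' * P := by
    rw [Matrix.sub_mul, Matrix.one_mul, sub_eq_iff_eq_add] at f1
    rw [hVdef]
    conv_lhs => rw [f1]
    simp only [Matrix.mul_add, Matrix.mul_assoc]
    abel
  have f3 : (1 - d * a') * V = c + d * (b' * P) := by
    rw [Matrix.sub_mul, Matrix.one_mul, sub_eq_iff_eq_add]
    conv_lhs => rw [hVdef]
    conv_lhs => rw [f2]
    simp only [Matrix.mul_add, Matrix.mul_assoc]
    abel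
  have f3' : V = (1 - d * a')⁻¹ * (c + d * (b' * P)) := by
    rw [← f3, ← Matrix.mul_assoc, nonsing_inv_hMul' hu', Matrix.one_mul]
  have f5 : t21 + t22 * P = d' * P + c' * V := by
    conv_rhs => rw [f3']
    rw [show t21 = c' * (1 - d * a')⁻¹ * c from rfl,
      show t22 = d' + c' * (1 - d * a')⁻¹ * d * b' from rfl]
    simp only [Matrix.mul_add, Matrix.add_mul, Matrix.mul_assoc]
    abel
  have f6 : P = A * (t21 + t22 * P) := by
    have hexp : (1 - t22 * A)⁻¹ = 1 + t22 * A * (1 - t22 * A)⁻¹ := inv_one_sub_expand e3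
    conv_rhs => rw [hPdef]
    conv_lhs => rw [hPdef]
    conv_lhs => rw [hexp]
    simp only [Matrix.mul_add, Matrix.add_mul, Matrix.mul_assoc, Matrix.mul_one,
      Matrix.one_mul]
    try abel
  have f7 : (1 - A * d') * P = A * (c' * V) := by
    rw [Matrix.sub_mul, Matrix.one_mul, sub_eq_iff_eq_add]
    conv_lhs => rw [f6, f5]
    simp only [Matrix.mul_add, Matrix.mul_assoc]
    abel
  have f7' : P = A * ((1 - d' * A)⁻¹ * (c' * V)) := by
    have h1 : P = (1 - A * d')⁻¹ * (A * (c' * V)) := by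
      rw [← f7, ← Matrix.mul_assoc, nonsing_inv_hMul' e6, Matrix.one_mul]
    rw [h1, ← Matrix.mul_assoc, ← mul_inv_comm' e6 e5, Matrix.mul_assoc]
  have f8 : U = A' * V := by
    rw [f2, f7', hA'def]
    simp only [Matrix.mul_add, Matrix.add_mul, Matrix.mul_assoc]
  have f9 : (1 - A' * d) * U = A' * c := by
    rw [Matrix.sub_mul, Matrix.one_mul, sub_eq_iff_eq_add]
    conv_lhs => rw [f8, hVdef]
    simp only [Matrix.mul_add, Matrix.mul_assoc]
    try abel
  have f10 : U = A' * ((1 - d * A')⁻¹ * c) := by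
    have h1 : U = (1 - A' * d)⁻¹ * (A' * c) := by
      rw [← f9, ← Matrix.mul_assoc, nonsing_inv_hMul' e8, Matrix.one_mul]
    rw [h1, ← Matrix.mul_assoc, ← mul_inv_comm' e8 e7, Matrix.mul_assoc]
  have hmain : t11 + t12 * A * (1 - t22 * A)⁻¹ * t21 = a + b * U := by
    conv_rhs => rw [hUdef]
    conv_rhs => rw [hPdef]
    rw [show t11 = a + b * (1 - a' * d)⁻¹ * a' * c from rfl,
      show t12 = b * (1 - a' * d)⁻¹ * b' from rfl]
    simp only [Matrix.mul_add, Matrix.add_mul, Matrix.mul_assoc]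
    abel
  rw [hmain, f10]
  simp only [Matrix.mul_assoc]

end Compose

end Helpers

/-- Nesting of Weyl discs under the `⊲` operation. -/
theorem weyl_disc_nested {r s : ℕ}
    (Q : Matrix (Fin 1 ⊕ Fin r) (Fin 1 ⊕ Fin r) ℂ)
    (R : Matrix (Fin r ⊕ Fin s) (Fin r ⊕ Fin s) ℂ)
    (hQ : MPlus Q) (hR : MPlus R) :
    Suitable Q R ∧ MPlus (tri Q R) ∧ weylDisc (tri Q R) ⊆ weylDisc Q := by
  obtain ⟨hsuit, hmp⟩ := mplus_tri Q R hQ hR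
  refine ⟨hsuit, hmp, ?_⟩
  unfold weylDisc
  apply closure_mono
  rintro w ⟨A, hA, hw⟩
  refine ⟨R.toBlocks₁₁ + R.toBlocks₁₂ * A * (1 - R.toBlocks₂₂ * A)⁻¹ * R.toBlocks₂₁,
    mobius_psd R hR.2.2 hR.2.1 A hA, ?_⟩
  have h := tri_point_eq Q R hQ.2.1 hR.1 hR.2.1 hR.2.2 hmp.2.1 A hA
  rw [hw, ← Matrix.add_apply, h, Matrix.add_apply]

end
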